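/- The series ∑_{n=1}^{∞} H_n/(n² 2^n) converges and equals ζ(3) - (π²/12) log 2. -/

import Mathlib

open Real Filter Finset Set Topology

noncomputable section
namespace HOS


def Hm (n : ℕ) : ℝ := ∑ k ∈ Finset.Icc 1 n, (1 : ℝ) / k

lemma Hm_nonneg (n : ℕ) : 0 ≤ Hm n :=
  Finset.sum_nonneg fun k _ => by positivity

lemma Hm_le (n : ℕ) : Hm n ≤ n := by
  calc Hm n ≤ ∑ k ∈ Finset.Icc 1 n, (1:ℝ) := by
        refine Finset.sum_le_sum fun k hk => ?_
        rcases Finset.mem_Icc.1 hk with ⟨h1, _⟩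
        rw [div_le_one (by exact_mod_cast h1.trans_lt' (by norm_num) : (0:ℝ) < k)]
        exact_mod_cast h1
    _ = n := by simp [Nat.card_Icc]

lemma Hm_succ_le (n : ℕ) : Hm (n+1) ≤ (n:ℝ) + 1 := by
  have := Hm_le (n+1); push_cast at this ⊢; linarith

-- coefficient sequences
def cL2 (n : ℕ) : ℝ := (((n:ℝ)+1)^2)⁻¹
def cL3 (n : ℕ) : ℝ := (((n:ℝ)+1)^3)⁻¹
def cHH (n : ℕ) : ℝ := Hm (n+1) / ((n:ℝ)+1)^2
def cH1 (n : ℕ) : ℝ := Hm (n+1) / ((n:ℝ)+1)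

lemma np1_pos (n : ℕ) : (0:ℝ) < (n:ℝ)+1 := by positivity

lemma cL2_abs (n : ℕ) : |cL2 n| ≤ 1 := by
  unfold cL2
  rw [abs_of_nonneg (by positivity), inv_le_one_iff₀]
  right; exact one_le_pow₀ (by linarith [np1_pos n, Nat.cast_nonneg (α := ℝ) n])

lemma cL3_abs (n : ℕ) : |cL3 n| ≤ 1 := by
  unfold cL3
  rw [abs_of_nonneg (by positivity), inv_le_one_iff₀]
  right; exact one_le_pow₀ (by linarith [np1_pos n, Nat.cast_nonneg (α := ℝ) n])

lemma cH1_abs (n : ℕ) : |cH1 n| ≤ 1 := by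
  unfold cH1
  rw [abs_of_nonneg (div_nonneg (Hm_nonneg _) (np1_pos n).le), div_le_one (np1_pos n)]
  exact Hm_succ_le n

lemma cHH_abs (n : ℕ) : |cHH n| ≤ 1 := by
  unfold cHH
  rw [abs_of_nonneg (div_nonneg (Hm_nonneg _) (by positivity)), div_le_one (by positivity)]
  calc Hm (n+1) ≤ (n:ℝ)+1 := Hm_succ_le n
    _ ≤ ((n:ℝ)+1)^2 := by nlinarith [np1_pos n]



-- general power series facts
lemma summable_aux {r : ℝ} (h0 : 0 ≤ r) (h1 : r < 1) :
    Summable (fun n : ℕ => ((n:ℝ)+1) * r ^ n) := by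
  have h2 : ‖r‖ < 1 := by rwa [norm_eq_abs, abs_of_nonneg h0]
  have ha := summable_pow_mul_geometric_of_norm_lt_one 1 h2 (R := ℝ)
  have hb := summable_geometric_of_lt_one h0 h1
  refine (ha.add hb).congr fun n => ?_
  push_cast; ring

lemma hasDerivAt_ps (c : ℕ → ℝ) (hc : ∀ n, |c n| ≤ 1) {x : ℝ} (hx : |x| < 1) :
    HasDerivAt (fun y : ℝ => ∑' n : ℕ, c n * y ^ (n+1))
      (∑' n : ℕ, ((n:ℝ)+1) * c n * x ^ n) x := by
  set r : ℝ := (1 + |x|)/2 with hr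
  have h0 : 0 ≤ |x| := abs_nonneg x
  have hr0 : 0 < r := by rw [hr]; linarith
  have hxr : |x| < r := by rw [hr]; linarith
  have hr1 : r < 1 := by rw [hr]; linarith
  refine hasDerivAt_tsum_of_isPreconnected (summable_aux hr0.le hr1)
    (isOpen_Ioo (a := -r) (b := r)) (convex_Ioo _ _).isPreconnected
    (g' := fun (n : ℕ) (y : ℝ) => ((n:ℝ)+1) * c n * y ^ n)
    (fun n y _ => ?_) (fun n y hy => ?_) (mem_Ioo.2 ⟨by linarith [hr0], hr0⟩) ?_
    (mem_Ioo.2 (abs_lt.1 hxr))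
  · have h := (hasDerivAt_pow (n+1) y).const_mul (c n)
    refine h.congr_deriv ?_
    push_cast; ring
  · have hy' : |y| ≤ r := by
      rcases mem_Ioo.1 hy with ⟨h1, h2⟩
      rw [abs_le]; constructor <;> linarith
    rw [norm_eq_abs, abs_mul, abs_mul, abs_pow]
    have h1 : |((n:ℝ)+1)| = (n:ℝ)+1 := abs_of_nonneg (by positivity)
    rw [h1]
    calc ((n:ℝ)+1) * |c n| * |y|^n ≤ ((n:ℝ)+1) * 1 * r^n := by
          apply mul_le_mul (mul_le_mul le_rfl (hc n) (abs_nonneg _) (by positivity))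
            (pow_le_pow_left₀ (abs_nonneg _) hy' n) (by positivity) (by positivity)
      _ = ((n:ℝ)+1) * r^n := by ring
  · refine summable_zero.congr fun n => ?_
    simp




-- Hm (n+1) = ∑_{k ∈ range (n+1)} 1/(k+1)
lemma Hm_eq (n : ℕ) : Hm (n+1) = ∑ k ∈ Finset.range (n+1), (1:ℝ) / ((k:ℝ)+1) := by
  unfold Hm
  have h1 : ∀ k : ℕ, (1:ℝ) / ((k:ℝ)+1) = (fun i : ℕ => (1:ℝ) / (i:ℝ)) (k + 1) := by
    intro k; push_cast; rfl
  calc ∑ k ∈ Finset.Icc 1 (n+1), (1:ℝ)/(k:ℝ)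
      = ∑ k ∈ Finset.Ico 0 (n+1), (fun i : ℕ => (1:ℝ) / (i:ℝ)) (k+1) := by
        rw [Finset.sum_Ico_add' (fun i : ℕ => (1:ℝ) / ((i:ℝ))) 0 (n+1) (c := 1)]
        simp only [zero_add, Finset.Ico_add_one_right_eq_Icc]
    _ = ∑ k ∈ Finset.range (n+1), (1:ℝ) / ((k:ℝ)+1) := by
        rw [Finset.range_eq_Ico]
        exact (Finset.sum_congr rfl fun k _ => (h1 k).symm)
  

-- Cauchy product: HasSum (fun n => Hm (n+1) * x^(n+1)) (-log(1-x) / (1-x))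
lemma hasSum_Hx {x : ℝ} (hx : |x| < 1) :
    HasSum (fun n : ℕ => Hm (n+1) * x ^ (n+1)) (-Real.log (1-x) / (1-x)) := by
  have hlog := hasSum_pow_div_log_of_abs_lt_one hx
  have hgeo : HasSum (fun n : ℕ => x ^ n) (1-x)⁻¹ := hasSum_geometric_of_abs_lt_one hx
  set f : ℕ → ℝ := fun n => x ^ (n+1) / ((n:ℝ)+1) with hf
  set g : ℕ → ℝ := fun n => x ^ n with hg
  have hfs : Summable fun n => ‖f n‖ := by
    refine (summable_geometric_of_lt_one (abs_nonneg x) hx).of_nonneg_of_le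
      (fun n => norm_nonneg _) fun n => ?_
    rw [hf, norm_eq_abs, abs_div, abs_pow]
    calc |x|^(n+1) / |(n:ℝ)+1| ≤ |x|^(n+1) / 1 := by
          apply div_le_div_of_nonneg_left ?_ ?_ ?_ <;> [positivity; positivity;
            (rw [abs_of_nonneg (by positivity : (0:ℝ) ≤ (n:ℝ)+1)]; linarith [Nat.cast_nonneg (α := ℝ) n])]
      _ = |x|^(n+1) := div_one _
      _ ≤ |x|^n := pow_le_pow_of_le_one (abs_nonneg x) hx.le (by omega)
  have hgs : Summable fun n => ‖g n‖ := by
    refine Summable.congr (summable_geometric_of_lt_one (abs_nonneg x) hx) fun n => ?_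
    rw [hg, norm_eq_abs, abs_pow]
  -- the convolution
  have hconv : ∀ n : ℕ, ∑ kl ∈ Finset.HasAntidiagonal.antidiagonal n, f kl.1 * g kl.2
      = Hm (n+1) * x ^ (n+1) := by
    intro n
    rw [Finset.Nat.sum_antidiagonal_eq_sum_range_succ (f := fun k l => f k * g l)]
    have : ∀ k ∈ Finset.range (n+1), f k * g (n - k) = (1 / ((k:ℝ)+1)) * x ^ (n+1) := by
      intro k hk
      have hkn : k ≤ n := Nat.lt_succ_iff.1 (Finset.mem_range.1 hk)
      rw [hf, hg]
      simp only
      rw [div_mul_eq_mul_div, ← pow_add]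
      have : k + 1 + (n - k) = n + 1 := by omega
      rw [this]; ring
    rw [Finset.sum_congr rfl this, ← Finset.sum_mul, ← Hm_eq]
  have hsum : Summable fun n => ∑ kl ∈ Finset.HasAntidiagonal.antidiagonal n, f kl.1 * g kl.2 :=
    summable_sum_mul_antidiagonal_of_summable_norm' hfs hfs.of_norm hgs hgs.of_norm
  have := hsum.hasSum
  rw [← tsum_mul_tsum_eq_tsum_sum_antidiagonal_of_summable_norm hfs hgs,
    hlog.tsum_eq, hgeo.tsum_eq] at this
  rw [neg_div]
  have h2 : -Real.log (1-x) * (1-x)⁻¹ = -(Real.log (1-x) / (1-x)) := by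
    rw [div_eq_mul_inv]; ring
  rw [h2] at this
  exact this.congr_fun fun n => (hconv n).symm

lemma summable_c (c : ℕ → ℝ) (hc : ∀ n, |c n| ≤ 1) {x : ℝ} (hx : |x| < 1) :
    Summable (fun n : ℕ => c n * x ^ (n+1)) := by
  refine (summable_geometric_of_lt_one (abs_nonneg x) hx).of_norm_bounded fun n => ?_
  rw [norm_eq_abs, abs_mul, abs_pow]
  calc |c n| * |x|^(n+1) ≤ 1 * |x|^(n+1) := by
        apply mul_le_mul_of_nonneg_right (hc n) (by positivity)
    _ = |x|^(n+1) := one_mul _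
    _ ≤ |x|^n := pow_le_pow_of_le_one (abs_nonneg x) hx.le (by omega)

def L2 (x : ℝ) : ℝ := ∑' n : ℕ, cL2 n * x ^ (n+1)
def L3 (x : ℝ) : ℝ := ∑' n : ℕ, cL3 n * x ^ (n+1)
def HHf (x : ℝ) : ℝ := ∑' n : ℕ, cHH n * x ^ (n+1)
def H1f (x : ℝ) : ℝ := ∑' n : ℕ, cH1 n * x ^ (n+1)

lemma hasDerivAt_L2 {x : ℝ} (hx : |x| < 1) (hx0 : x ≠ 0) :
    HasDerivAt L2 (-Real.log (1-x) / x) x := by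
  have h := hasDerivAt_ps cL2 cL2_abs hx
  have hlog := (hasSum_pow_div_log_of_abs_lt_one hx).div_const x
  have heq : (fun n : ℕ => ((n:ℝ)+1) * cL2 n * x^n)
      = fun n : ℕ => x^(n+1) / ((n:ℝ)+1) / x := by
    funext n; unfold cL2
    have := np1_pos n
    field_simp
    ring
  rw [show (∑' n : ℕ, ((n:ℝ)+1) * cL2 n * x^n) = -Real.log (1-x) / x by
    rw [heq, hlog.tsum_eq, neg_div]] at h
  exact h

lemma hasDerivAt_L3 {x : ℝ} (hx : |x| < 1) (hx0 : x ≠ 0) :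
    HasDerivAt L3 (L2 x / x) x := by
  have h := hasDerivAt_ps cL3 cL3_abs hx
  have hL2 := ((summable_c cL2 cL2_abs hx).hasSum).div_const x
  have heq : (fun n : ℕ => cL2 n * x^(n+1) / x)
      = fun n : ℕ => ((n:ℝ)+1) * cL3 n * x^n := by
    funext n; unfold cL2 cL3
    have := np1_pos n
    field_simp
    ring
  rw [heq] at hL2
  rw [hL2.tsum_eq] at h
  exact h

lemma hasDerivAt_HHf {x : ℝ} (hx : |x| < 1) (hx0 : x ≠ 0) :
    HasDerivAt HHf (H1f x / x) x := by
  have h := hasDerivAt_ps cHH cHH_abs hx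
  have hH1 := ((summable_c cH1 cH1_abs hx).hasSum).div_const x
  have heq : (fun n : ℕ => cH1 n * x^(n+1) / x)
      = fun n : ℕ => ((n:ℝ)+1) * cHH n * x^n := by
    funext n; unfold cH1 cHH
    have := np1_pos n
    field_simp
    ring
  rw [heq] at hH1
  rw [hH1.tsum_eq] at h
  exact h

lemma hasDerivAt_H1f {x : ℝ} (hx : |x| < 1) (hx0 : x ≠ 0) :
    HasDerivAt H1f (-Real.log (1-x) / (1-x) / x) x := by
  have h := hasDerivAt_ps cH1 cH1_abs hx
  have hHx := (hasSum_Hx hx).div_const x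
  have heq : (fun n : ℕ => Hm (n+1) * x^(n+1) / x)
      = fun n : ℕ => ((n:ℝ)+1) * cH1 n * x^n := by
    funext n; unfold cH1
    have := np1_pos n
    field_simp
    ring
  rw [heq] at hHx
  rw [hHx.tsum_eq] at h
  exact h

lemma ps_zero (c : ℕ → ℝ) : ∑' n : ℕ, c n * (0:ℝ) ^ (n+1) = 0 := by simp

-- constancy helper
lemma const_of_deriv_zero {F : ℝ → ℝ} (hF : ∀ x ∈ Ioo (0:ℝ) 1, HasDerivAt F 0 x)
    {c : ℝ} (hlim : Tendsto F (𝓝[>] (0:ℝ)) (𝓝 c)) :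
    ∀ x ∈ Ioo (0:ℝ) 1, F x = c := by
  have key : ∀ a b : ℝ, a ∈ Ioo (0:ℝ) 1 → b ∈ Ioo (0:ℝ) 1 → a < b → F b = F a := by
    intro a b ha hb hab
    have hsub : Icc a b ⊆ Ioo (0:ℝ) 1 := fun z hz =>
      ⟨lt_of_lt_of_le ha.1 hz.1, lt_of_le_of_lt hz.2 hb.2⟩
    have hcont : ContinuousOn F (Icc a b) := fun z hz =>
      ((hF z (hsub hz)).continuousAt).continuousWithinAt
    obtain ⟨w, hw, hslope⟩ := exists_hasDerivAt_eq_slope F (fun _ => 0) hab hcont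
      (fun z hz => hF z (hsub ⟨hz.1.le, hz.2.le⟩))
    have hba : b - a ≠ 0 := sub_ne_zero.2 hab.ne'
    have := hslope.symm
    rw [div_eq_zero_iff] at this
    rcases this with h | h
    · linarith [sub_eq_zero.1 h]
    · exact absurd h hba
  intro x hx
  have heq : ∀ᶠ z in 𝓝[>] (0:ℝ), F z = F x := by
    filter_upwards [Ioo_mem_nhdsGT_of_mem (Set.mem_Ico.2 ⟨le_refl (0:ℝ), hx.1⟩)] with z hz
    exact (key z x ⟨hz.1, hz.2.trans hx.2⟩ hx hz.2).symm ▸ rfl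
  have h2 : Tendsto F (𝓝[>] (0:ℝ)) (𝓝 (F x)) :=
    Tendsto.congr' (by filter_upwards [heq] with z hz; exact hz.symm) tendsto_const_nhds
  exact tendsto_nhds_unique h2 hlim

-- limits toward 0 from the right
lemma tendsto_ps_zero (c : ℕ → ℝ) (hc : ∀ n, |c n| ≤ 1) :
    Tendsto (fun x : ℝ => ∑' n : ℕ, c n * x ^ (n+1)) (𝓝[>] (0:ℝ)) (𝓝 0) := by
  have h := (hasDerivAt_ps c hc (x := 0) (by norm_num)).continuousAt
  have h2 : Tendsto (fun x : ℝ => ∑' n : ℕ, c n * x ^ (n+1)) (𝓝[>] (0:ℝ))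
      (𝓝 (∑' n : ℕ, c n * (0:ℝ) ^ (n+1))) := h.tendsto.mono_left nhdsWithin_le_nhds
  rwa [ps_zero c] at h2

lemma L_shift (c : ℕ → ℝ) (y : ℝ) :
    ∑' n : ℕ, c n * y ^ (n+1) = y * ∑' n : ℕ, c n * y ^ n := by
  rw [← tsum_mul_left]
  congr 1 with n
  ring

lemma tendsto_one_sub : Tendsto (fun x : ℝ => 1 - x) (𝓝[>] (0:ℝ)) (𝓝[<] (1:ℝ)) := by
  apply tendsto_nhdsWithin_of_tendsto_nhds_of_eventually_within
  · have hcont : Continuous (fun x : ℝ => 1 - x) := by continuity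
    have : Tendsto (fun x : ℝ => 1 - x) (𝓝 0) (𝓝 1) := by
      simpa using hcont.tendsto 0
    exact this.mono_left nhdsWithin_le_nhds
  · filter_upwards [self_mem_nhdsWithin] with z hz
    simp only [Set.mem_Iio]
    have : (0:ℝ) < z := hz
    linarith

lemma tendsto_abel (c : ℕ → ℝ) (hc : Summable c) :
    Tendsto (fun x : ℝ => ∑' n : ℕ, c n * (1-x) ^ (n+1)) (𝓝[>] (0:ℝ))
      (𝓝 (∑' n, c n)) := by
  have habel := Real.tendsto_tsum_powerSeries_nhdsWithin_lt (f := c)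
    (hc.hasSum.tendsto_sum_nat)
  have hmul : Tendsto (fun y : ℝ => y * ∑' n : ℕ, c n * y ^ n) (𝓝[<] (1:ℝ))
      (𝓝 (1 * ∑' n, c n)) :=
    Tendsto.mul (tendsto_id.mono_left nhdsWithin_le_nhds) habel
  rw [one_mul] at hmul
  have := hmul.comp tendsto_one_sub
  refine this.congr fun x => ?_
  simp only [Function.comp]
  exact (L_shift c (1-x)).symm

lemma summable_cL2 : Summable cL2 := by
  have h := summable_one_div_nat_pow.2 (le_refl 2)
  have h2 := (summable_nat_add_iff 1).2 h
  refine h2.congr fun n => ?_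
  unfold cL2
  push_cast
  rw [one_div]

lemma summable_cL3 : Summable cL3 := by
  have h := summable_one_div_nat_pow.2 (by norm_num : 2 ≤ 3)
  have h2 := (summable_nat_add_iff 1).2 h
  refine h2.congr fun n => ?_
  unfold cL3
  push_cast
  rw [one_div]

-- log limits
lemma tendsto_log_one_sub : Tendsto (fun x : ℝ => Real.log (1-x)) (𝓝[>] (0:ℝ)) (𝓝 0) := by
  have h : ContinuousAt Real.log 1 := Real.continuousAt_log one_ne_zero
  have h2 : Tendsto (fun x : ℝ => Real.log (1-x)) (𝓝 0) (𝓝 (Real.log 1)) := by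
    apply h.tendsto.comp
    have hcont : Continuous (fun x : ℝ => 1 - x) := by continuity
    simpa using hcont.tendsto 0
  rw [Real.log_one] at h2
  exact h2.mono_left nhdsWithin_le_nhds

lemma abs_log_one_sub_le {x : ℝ} (hx : x ∈ Ioo (0:ℝ) (1/2)) :
    |Real.log (1-x)| ≤ 2 * x := by
  obtain ⟨hx0, hx2⟩ := hx
  have h1 : (0:ℝ) < 1 - x := by linarith
  have hle : Real.log (1-x) ≤ 0 := Real.log_nonpos (by linarith) (by linarith)
  rw [abs_of_nonpos hle, ← Real.log_inv]
  have h3 : Real.log (1-x)⁻¹ ≤ (1-x)⁻¹ - 1 := Real.log_le_sub_one_of_pos (by positivity)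
  have h4 : (1-x)⁻¹ ≤ 1 + 2 * x := by
    rw [inv_le_iff_one_le_mul₀ h1]
    nlinarith
  linarith

lemma tendsto_log_mul_log_one_sub :
    Tendsto (fun x : ℝ => Real.log x * Real.log (1-x)) (𝓝[>] (0:ℝ)) (𝓝 0) := by
  have h0 : Tendsto (fun x : ℝ => Real.log x * x) (𝓝[>] (0:ℝ)) (𝓝 0) := by
    have := tendsto_log_mul_rpow_nhdsGT_zero (by norm_num : (0:ℝ) < 1)
    refine this.congr' ?_
    filter_upwards [self_mem_nhdsWithin] with z hz
    rw [Real.rpow_one]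
  have hg : Tendsto (fun x : ℝ => 2 * |Real.log x * x|) (𝓝[>] (0:ℝ)) (𝓝 0) := by
    have := (h0.abs).const_mul 2
    simpa using this
  apply squeeze_zero_norm' ?_ hg
  filter_upwards [Ioo_mem_nhdsGT_of_mem (show (0:ℝ) ∈ Set.Ico (0:ℝ) (1/2) from ⟨le_refl _, by norm_num⟩)] with x hx
  have hx0 : (0:ℝ) < x := hx.1
  rw [Real.norm_eq_abs, abs_mul]
  calc |Real.log x| * |Real.log (1-x)| ≤ |Real.log x| * (2 * x) := by
        apply mul_le_mul_of_nonneg_left (abs_log_one_sub_le hx) (abs_nonneg _)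
    _ = 2 * |Real.log x * x| := by
        rw [abs_mul, abs_of_pos hx0]; ring

-- derivative of inner function 1 - y
lemma hasDerivAt_one_sub (x : ℝ) : HasDerivAt (fun y : ℝ => 1 - y) (-1) x := by
  simpa using ((hasDerivAt_id x).const_sub 1)

section derivs
variable {x : ℝ}

lemma habs (hx0 : 0 < x) (hx1 : x < 1) : |x| < 1 := abs_lt.2 ⟨by linarith, hx1⟩
lemma habs2 (hx0 : 0 < x) (hx1 : x < 1) : |1 - x| < 1 := abs_lt.2 ⟨by linarith, by linarith⟩

lemma hasDerivAt_L2c (hx0 : 0 < x) (hx1 : x < 1) :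
    HasDerivAt (fun y : ℝ => L2 (1-y)) (Real.log x / (1-x)) x := by
  have h := (hasDerivAt_L2 (x := 1-x) (habs2 hx0 hx1) (by linarith : (1:ℝ)-x ≠ 0)).comp
    x (hasDerivAt_one_sub x)
  simp only [Function.comp_def, sub_sub_cancel] at h
  refine h.congr_deriv ?_
  ring

lemma hasDerivAt_L3c (hx0 : 0 < x) (hx1 : x < 1) :
    HasDerivAt (fun y : ℝ => L3 (1-y)) (-(L2 (1-x) / (1-x))) x := by
  have h := (hasDerivAt_L3 (x := 1-x) (habs2 hx0 hx1) (by linarith : (1:ℝ)-x ≠ 0)).comp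
    x (hasDerivAt_one_sub x)
  simp only [Function.comp_def, sub_sub_cancel] at h
  refine h.congr_deriv ?_
  ring

lemma hasDerivAt_log1s (hx0 : 0 < x) (hx1 : x < 1) :
    HasDerivAt (fun y : ℝ => Real.log (1-y)) (-(1-x)⁻¹) x := by
  have h := (Real.hasDerivAt_log (by linarith : (1:ℝ)-x ≠ 0)).comp x (hasDerivAt_one_sub x)
  simp only [Function.comp_def] at h
  refine h.congr_deriv ?_
  ring

end derivs

def zeta2 : ℝ := ∑' n : ℕ, cL2 n
def zeta3 : ℝ := ∑' n : ℕ, cL3 n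

lemma L2_reflection : ∀ x ∈ Ioo (0:ℝ) 1,
    L2 x + L2 (1-x) + Real.log x * Real.log (1-x) = zeta2 := by
  apply const_of_deriv_zero
  · intro x hx
    obtain ⟨hx0, hx1⟩ := hx
    have hne : x ≠ 0 := ne_of_gt hx0
    have H := ((hasDerivAt_L2 (habs hx0 hx1) hne).add (hasDerivAt_L2c hx0 hx1)).add
      ((Real.hasDerivAt_log hne).mul (hasDerivAt_log1s hx0 hx1))
    refine H.congr_deriv ?_
    have h1 : (1:ℝ) - x ≠ 0 := by linarith
    field_simp
    ring
  · have t1 := tendsto_ps_zero cL2 cL2_abs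
    have t2 := tendsto_abel cL2 summable_cL2
    have t3 := tendsto_log_mul_log_one_sub
    have h := (t1.add t2).add t3
    simp only [zero_add, add_zero] at h
    exact h

lemma H1f_eq : ∀ x ∈ Ioo (0:ℝ) 1,
    H1f x - Real.log (1-x)^2/2 - L2 x = 0 := by
  apply const_of_deriv_zero
  · intro x hx
    obtain ⟨hx0, hx1⟩ := hx
    have hne : x ≠ 0 := ne_of_gt hx0
    have hpow : HasDerivAt (fun y : ℝ => Real.log (1-y)^2/2)
        ((2 * Real.log (1-x)^(2-1) * (-(1-x)⁻¹))/2) x :=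
      ((hasDerivAt_log1s hx0 hx1).pow 2).div_const 2
    have H := ((hasDerivAt_H1f (habs hx0 hx1) hne).sub hpow).sub
      (hasDerivAt_L2 (habs hx0 hx1) hne)
    refine H.congr_deriv ?_
    have h1 : (1:ℝ) - x ≠ 0 := by linarith
    norm_num
    field_simp
    ring
  · have t1 := tendsto_ps_zero cH1 cH1_abs
    have t2 : Tendsto (fun x : ℝ => Real.log (1-x)^2/2) (𝓝[>] (0:ℝ)) (𝓝 0) := by
      have := (tendsto_log_one_sub.pow 2).div_const 2
      simpa using this
    have t3 := tendsto_ps_zero cL2 cL2_abs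
    have h := (t1.sub t2).sub t3
    simpa [H1f, L2] using h

lemma main_identity : ∀ x ∈ Ioo (0:ℝ) 1,
    HHf x - L3 x + L3 (1-x) - L2 (1-x) * Real.log (1-x)
      - 1/2 * Real.log x * Real.log (1-x)^2 = zeta3 := by
  apply const_of_deriv_zero
  · intro x hx
    obtain ⟨hx0, hx1⟩ := hx
    have hne : x ≠ 0 := ne_of_gt hx0
    have h1 : (1:ℝ) - x ≠ 0 := by linarith
    have hHH := hasDerivAt_HHf (habs hx0 hx1) hne
    have hH1v : H1f x = Real.log (1-x)^2/2 + L2 x := by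
      have := H1f_eq x ⟨hx0, hx1⟩; linarith
    rw [hH1v] at hHH
    have hL3 := hasDerivAt_L3 (habs hx0 hx1) hne
    have hL3c := hasDerivAt_L3c hx0 hx1
    have hprod := (hasDerivAt_L2c hx0 hx1).mul (hasDerivAt_log1s hx0 hx1)
    have hpow : HasDerivAt (fun y : ℝ => Real.log (1-y)^2)
        (2 * Real.log (1-x)^(2-1) * (-(1-x)⁻¹)) x := (hasDerivAt_log1s hx0 hx1).pow 2
    have hhalf : HasDerivAt (fun y : ℝ => 1/2 * Real.log y) (1/2 * x⁻¹) x :=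
      (Real.hasDerivAt_log hne).const_mul (1/2)
    have hlast := hhalf.mul hpow
    have H := (((hHH.sub hL3).add hL3c).sub hprod).sub hlast
    refine H.congr_deriv ?_
    norm_num
    field_simp
    ring
  · have t1 := tendsto_ps_zero cHH cHH_abs
    have t2 := tendsto_ps_zero cL3 cL3_abs
    have t3 := tendsto_abel cL3 summable_cL3
    have t4 : Tendsto (fun x : ℝ => L2 (1-x) * Real.log (1-x)) (𝓝[>] (0:ℝ)) (𝓝 0) := by
      have := (tendsto_abel cL2 summable_cL2).mul tendsto_log_one_sub
      simpa [L2] using this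
    have t5 : Tendsto (fun x : ℝ => 1/2 * Real.log x * Real.log (1-x)^2)
        (𝓝[>] (0:ℝ)) (𝓝 0) := by
      have h := (tendsto_log_mul_log_one_sub.mul tendsto_log_one_sub).const_mul (1/2)
      simp only [mul_zero, zero_mul] at h
      refine h.congr fun x => ?_
      ring
    have h := (((t1.sub t2).add t3).sub t4).sub t5
    simp only [sub_zero, zero_sub, zero_add, neg_zero, add_zero] at h
    exact h

lemma hasSum_cL2 : HasSum cL2 (Real.pi^2/6) := by
  have h0 : HasSum (fun n : ℕ => 1/((n:ℝ))^2) (Real.pi^2/6 + ∑ i ∈ Finset.range 1, 1/((i:ℝ))^2) := by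
    have h := hasSum_zeta_two
    have : Real.pi^2/6 + ∑ i ∈ Finset.range 1, 1/((i:ℝ))^2 = Real.pi^2/6 := by norm_num
    rw [this]
    exact h
  have h := (hasSum_nat_add_iff (f := fun n : ℕ => 1/((n:ℝ))^2) 1).2 h0
  refine h.congr_fun fun n => ?_
  unfold cL2
  push_cast
  rw [one_div]

lemma zeta2_eq : zeta2 = Real.pi^2/6 := hasSum_cL2.tsum_eq



lemma HHf_half : HHf (1/2) = zeta3 - zeta2/2 * Real.log 2 := by
  have h12 : (1/2:ℝ) ∈ Ioo (0:ℝ) 1 := by constructor <;> norm_num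
  have hmain := main_identity (1/2) h12
  have hrefl := L2_reflection (1/2) h12
  have hsub : (1:ℝ) - 1/2 = 1/2 := by norm_num
  rw [hsub] at hmain hrefl
  have hlog : Real.log (1/2:ℝ) = -Real.log 2 := by
    rw [show (1/2:ℝ) = 2⁻¹ from by norm_num, Real.log_inv]
  rw [hlog] at hmain hrefl
  linear_combination hmain - (Real.log 2 / 2) * hrefl

lemma zeta3_eq : zeta3 = ∑' n : ℕ, 1/((n:ℝ)+1)^3 :=
  tsum_congr fun n => by unfold cL3; rw [one_div]

end HOS

theorem harmonic_over_nsq_two_pow :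
    HasSum (fun n : ℕ =>
        (∑ k ∈ Finset.Icc 1 (n + 1), (1 : ℝ) / k)
          / (((n : ℝ) + 1) ^ 2 * 2 ^ (n + 1)))
      ((∑' n : ℕ, 1 / ((n : ℝ) + 1) ^ 3) - (Real.pi ^ 2 / 12) * Real.log 2) := by
  have hsum : Summable (fun n : ℕ => HOS.cHH n * ((1:ℝ)/2)^(n+1)) :=
    HOS.summable_c HOS.cHH HOS.cHH_abs (by rw [abs_of_nonneg] <;> norm_num)
  have hH : HasSum (fun n : ℕ => HOS.cHH n * ((1:ℝ)/2)^(n+1)) (HOS.HHf (1/2)) := hsum.hasSum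
  have hval : HOS.HHf (1/2) = (∑' n : ℕ, 1/((n:ℝ)+1)^3) - (Real.pi^2/12) * Real.log 2 := by
    rw [HOS.HHf_half, HOS.zeta2_eq, HOS.zeta3_eq]
    ring
  rw [hval] at hH
  refine hH.congr_fun fun n => ?_
  show (∑ k ∈ Finset.Icc 1 (n + 1), (1 : ℝ) / k) / (((n : ℝ) + 1) ^ 2 * 2 ^ (n + 1))
      = HOS.cHH n * ((1:ℝ)/2)^(n+1)
  unfold HOS.cHH HOS.Hm
  rw [div_pow, one_pow, div_mul_div_comm, mul_one]
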